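/- Let H be a d-uniform hypergraph with a hitting set of size at most k. Then the number of large cores of H that do not contain any significant core as a subset is at most (d-1)!·k^{d-1}. -/

import Mathlib

/-- `X` is a hitting set of the hypergraph with hyperedge family `H`. -/
def IsHittingSet {V : Type*} [DecidableEq V] (H : Finset (Finset V)) (X : Finset V) : Prop :=
  ∀ F ∈ H, (F ∩ X).Nonempty

/-- `C` is the core of a sunflower in `H` with at least `t` hyperedges. -/
def HasSunflower {V : Type*} [DecidableEq V] (H : Finset (Finset V)) (C : Finset V)
    (t : ℕ) : Prop :=
  ∃ S ⊆ H, t ≤ S.card ∧ (∀ F ∈ S, C ⊆ F) ∧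
    ∀ F ∈ S, ∀ F' ∈ S, F ≠ F' → F ∩ F' = C

lemma hasSunflower_mono {V : Type*} [DecidableEq V] {H : Finset (Finset V)} {C : Finset V}
    {t t' : ℕ} (h : HasSunflower H C t) (htt : t' ≤ t) : HasSunflower H C t' := by
  obtain ⟨S, h1, h2, h3, h4⟩ := h
  exact ⟨S, h1, htt.trans h2, h3, h4⟩

/-- A significant core meets the hitting set. -/
lemma sig_inter_X {V : Type*} [DecidableEq V] {H : Finset (Finset V)} {X C : Finset V} {k : ℕ}
    (hX : IsHittingSet H X) (hXk : X.card ≤ k) (h : HasSunflower H C (k + 1)) :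
    (C ∩ X).Nonempty := by
  classical
  by_contra hCX
  obtain ⟨S, hSH, hcard, hsub, hpair⟩ := h
  have hSne : S.Nonempty := Finset.card_pos.mp (by omega)
  obtain ⟨F0, hF0⟩ := hSne
  obtain ⟨x0, _⟩ := hX F0 (hSH hF0)
  have hinj : S.card ≤ X.card := by
    apply Finset.card_le_card_of_injOn
      (fun F => if h : (F ∩ X).Nonempty then h.choose else x0)
    · intro F hF
      have hne : (F ∩ X).Nonempty := hX F (hSH hF)
      simp only [dif_pos hne]
      exact (Finset.mem_inter.mp hne.choose_spec).2
    · intro F hF F' hF' heq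
      by_contra hne
      have h1 : (F ∩ X).Nonempty := hX F (hSH hF)
      have h2 : (F' ∩ X).Nonempty := hX F' (hSH hF')
      simp only [dif_pos h1, dif_pos h2] at heq
      have hz1 := h1.choose_spec
      have hz2 := h2.choose_spec
      rw [heq] at hz1
      have hzC : h2.choose ∈ C := by
        rw [← hpair F hF F' hF' hne]
        exact Finset.mem_inter.mpr
          ⟨(Finset.mem_inter.mp hz1).1, (Finset.mem_inter.mp hz2).1⟩
      exact hCX ⟨h2.choose, Finset.mem_inter.mpr ⟨hzC, (Finset.mem_inter.mp hz2).2⟩⟩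
  omega

/-- The core of a sunflower with at least two petals in a `d`-uniform hypergraph
has fewer than `d` elements. -/
lemma core_card_lt {V : Type*} [DecidableEq V] {H : Finset (Finset V)} {d : ℕ} {C : Finset V}
    {t : ℕ} (huni : ∀ F ∈ H, F.card = d) (ht : 2 ≤ t) (h : HasSunflower H C t) :
    C.card < d := by
  obtain ⟨S, hSH, hcard, hsub, hpair⟩ := h
  have h1 : 1 < S.card := by omega
  obtain ⟨F, hF, F', hF', hne⟩ := Finset.one_lt_card.mp h1
  have hCF : C ⊆ F := hsub F hF
  have hC : F ∩ F' = C := hpair F hF F' hF' hne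
  have hssub : C ⊂ F := by
    refine Finset.ssubset_iff_subset_ne.mpr ⟨hCF, ?_⟩
    intro hCeq
    rw [hCeq] at hC
    have hFF' : F ⊆ F' := Finset.inter_eq_left.mp hC
    exact hne (Finset.eq_of_subset_of_card_le hFF'
      (by rw [huni F (hSH hF), huni F' (hSH hF')]))
  calc C.card < F.card := Finset.card_lt_card hssub
    _ = d := huni F (hSH hF)

/-- Key step: given a non-significant set `D`, there is a small candidate set `Y`
such that every large core strictly containing `D` meets `Y` outside `D`. -/
lemma exists_candidates {V : Type*} [DecidableEq V] {H : Finset (Finset V)} {d k : ℕ}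
    (hd : 1 ≤ d) (hk : 1 ≤ k) (huni : ∀ F ∈ H, F.card = d) (D : Finset V)
    (hD : ¬ HasSunflower H D (k + 1)) :
    ∃ Y : Finset V, Y.card ≤ (d - D.card) * k ∧
      ∀ C : Finset V, D ⊂ C → HasSunflower H C (10 * d * k + 1) →
        ∃ x ∈ Y, x ∈ C ∧ x ∉ D := by
  set 𝒮 : Finset (Finset (Finset V)) := H.powerset.filter (fun S => (∀ F ∈ S, D ⊆ F) ∧
        ∀ F ∈ S, ∀ F' ∈ S, F ≠ F' → F ∩ F' = D) with h𝒮
  obtain ⟨S, hS𝒮, hSmax⟩ := Finset.exists_max_image 𝒮 Finset.card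
      ⟨∅, by simp [h𝒮]⟩
  rw [h𝒮] at hS𝒮
  rw [Finset.mem_filter, Finset.mem_powerset] at hS𝒮
  obtain ⟨hSH, hSD, hSpair⟩ := hS𝒮
  have hSk : S.card ≤ k := by
    by_contra hcon
    push_neg at hcon
    exact hD ⟨S, hSH, hcon, hSD, hSpair⟩
  have hYcard : (S.biUnion (fun G => G \ D)).card ≤ (d - D.card) * k := by
    calc (S.biUnion (fun G => G \ D)).card ≤ ∑ G ∈ S, (G \ D).card :=
          Finset.card_biUnion_le
      _ ≤ ∑ _G ∈ S, (d - D.card) := Finset.sum_le_sum (fun G hG => by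
          have : (G \ D).card = d - D.card := by
            rw [Finset.card_sdiff_of_subset (hSD G hG), huni G (hSH hG)]
          exact this.le)
      _ = S.card * (d - D.card) := by rw [Finset.sum_const, smul_eq_mul]
      _ ≤ k * (d - D.card) := Nat.mul_le_mul_right _ hSk
      _ = (d - D.card) * k := Nat.mul_comm _ _
  refine ⟨S.biUnion (fun G => G \ D), hYcard, ?_⟩
  intro C hDC hbig
  by_contra hno
  push_neg at hno
  obtain ⟨T, hTH, hTcard, hTsub, hTpair⟩ := hbig
  obtain ⟨v0, hv0C, _⟩ := Finset.exists_of_ssubset hDC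
  have hext : ∀ F ∈ T, F ∉ S →
      ∃ z, z ∈ S.biUnion (fun G => G \ D) ∧ z ∈ F ∧ z ∉ C := by
    intro F hFT hFS
    have hDF : D ⊆ F := hDC.subset.trans (hTsub F hFT)
    have hexG : ∃ G ∈ S, F ∩ G ≠ D := by
      by_contra hni
      push_neg at hni
      have hins_mem : insert F S ∈ 𝒮 := by
        rw [h𝒮, Finset.mem_filter, Finset.mem_powerset]
        refine ⟨Finset.insert_subset (hTH hFT) hSH, ?_, ?_⟩
        · intro G hG
          rcases Finset.mem_insert.mp hG with rfl | hG'
          · exact hDF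
          · exact hSD G hG'
        · intro A hA B hB hAB
          rcases Finset.mem_insert.mp hA with rfl | hA'
          · rcases Finset.mem_insert.mp hB with rfl | hB'
            · exact absurd rfl hAB
            · exact hni B hB'
          · rcases Finset.mem_insert.mp hB with rfl | hB'
            · rw [Finset.inter_comm]; exact hni A hA'
            · exact hSpair A hA' B hB' hAB
      have hle' := hSmax _ hins_mem
      rw [Finset.card_insert_of_notMem hFS] at hle'
      omega
    obtain ⟨G, hGS, hFG⟩ := hexG
    have hDFG : D ⊆ F ∩ G := Finset.subset_inter hDF (hSD G hGS)
    have hss : D ⊂ F ∩ G := Finset.ssubset_iff_subset_ne.mpr ⟨hDFG, Ne.symm hFG⟩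
    obtain ⟨z, hzFG, hzD⟩ := Finset.exists_of_ssubset hss
    rw [Finset.mem_inter] at hzFG
    have hzY : z ∈ S.biUnion (fun G => G \ D) :=
      Finset.mem_biUnion.mpr ⟨G, hGS, Finset.mem_sdiff.mpr ⟨hzFG.2, hzD⟩⟩
    exact ⟨z, hzY, hzFG.1, fun hzC => hzD (hno z hzY hzC)⟩
  have hcard2 : (T \ S).card ≤ (S.biUnion (fun G => G \ D)).card := by
    apply Finset.card_le_card_of_injOn
      (fun F => if h : ∃ z, z ∈ S.biUnion (fun G => G \ D) ∧ z ∈ F ∧ z ∉ C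
        then h.choose else v0)
    · intro F hF
      rw [Finset.mem_coe, Finset.mem_sdiff] at hF
      have hz := hext F hF.1 hF.2
      simp only [dif_pos hz]
      exact hz.choose_spec.1
    · intro F hF F' hF' heq
      by_contra hne
      rw [Finset.mem_coe, Finset.mem_sdiff] at hF hF'
      have hz := hext F hF.1 hF.2
      have hz' := hext F' hF'.1 hF'.2
      simp only [dif_pos hz, dif_pos hz'] at heq
      have s1 := hz.choose_spec
      have s2 := hz'.choose_spec
      rw [heq] at s1
      have hmem : hz'.choose ∈ F ∩ F' := Finset.mem_inter.mpr ⟨s1.2.1, s2.2.1⟩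
      rw [hTpair F hF.1 F' hF'.1 hne] at hmem
      exact s2.2.2 hmem
  have hTS : (T ∩ S).card ≤ k :=
    le_trans (Finset.card_le_card Finset.inter_subset_right) hSk
  have hsplit : (T \ S).card + (T ∩ S).card = T.card := Finset.card_sdiff_add_card_inter T S
  have hdk : (d - D.card) * k ≤ d * k := Nat.mul_le_mul_right _ (Nat.sub_le _ _)
  have hT2 : T.card ≤ d * k + k := by
    calc T.card = (T \ S).card + (T ∩ S).card := hsplit.symm
      _ ≤ (d - D.card) * k + k := Nat.add_le_add (hcard2.trans hYcard) hTS
      _ ≤ d * k + k := Nat.add_le_add_right hdk k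
  have hkdk : k ≤ 9 * (d * k) := by
    calc k = 1 * k := (one_mul k).symm
      _ ≤ 9 * d * k := Nat.mul_le_mul_right k (by omega)
      _ = 9 * (d * k) := by ring
  have h10 : (10 : ℕ) * d * k = d * k + 9 * (d * k) := by ring
  linarith [hT2, hTcard, hkdk, h10]

/-- The main counting lemma, by induction. -/
lemma count_aux {V : Type*} [DecidableEq V] {H : Finset (Finset V)} {d k : ℕ}
    (hd : 1 ≤ d) (hk : 1 ≤ k) (huni : ∀ F ∈ H, F.card = d)
    (𝒞 : Finset (Finset V))
    (h𝒞 : ∀ C ∈ 𝒞, HasSunflower H C (10 * d * k + 1) ∧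
      ¬ ∃ C' ⊂ C, HasSunflower H C' (k + 1)) :
    ∀ (n : ℕ) (D : Finset V), d ≤ D.card + n + 1 →
      (𝒞.filter (fun C => D ⊆ C)).card ≤ (d - D.card).factorial * k ^ n := by
  classical
  have hle : k + 1 ≤ 10 * d * k + 1 := by
    have h1 : 1 * k ≤ 10 * d * k := Nat.mul_le_mul_right k (by omega)
    linarith
  have h2le : 2 ≤ 10 * d * k + 1 :=
    Nat.succ_le_succ (Nat.mul_pos (Nat.mul_pos (by norm_num) hd) hk)
  have hpos : ∀ (n : ℕ) (D : Finset V), 0 < (d - D.card).factorial * k ^ n :=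
    fun n D => Nat.mul_pos (Nat.factorial_pos _) (pow_pos hk n)
  have hsingle : ∀ (n : ℕ) (D : Finset V), HasSunflower H D (k + 1) →
      (𝒞.filter (fun C => D ⊆ C)).card ≤ (d - D.card).factorial * k ^ n := by
    intro n D hsig
    have hss : 𝒞.filter (fun C => D ⊆ C) ⊆ {D} := by
      intro C hC
      rw [Finset.mem_filter] at hC
      rcases eq_or_ne D C with rfl | hne
      · exact Finset.mem_singleton_self _
      · exact absurd ⟨D, Finset.ssubset_iff_subset_ne.mpr ⟨hC.2, hne⟩, hsig⟩
          ((h𝒞 C hC.1).2)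
    calc (𝒞.filter (fun C => D ⊆ C)).card ≤ ({D} : Finset (Finset V)).card :=
          Finset.card_le_card hss
      _ = 1 := Finset.card_singleton _
      _ ≤ _ := hpos n D
  intro n
  induction n with
  | zero =>
    intro D hDn
    by_cases hsig : HasSunflower H D (k + 1)
    · exact hsingle 0 D hsig
    · have hempty : 𝒞.filter (fun C => D ⊆ C) = ∅ := by
        apply Finset.eq_empty_of_forall_notMem
        intro C hC
        rw [Finset.mem_filter] at hC
        obtain ⟨hC𝒞, hDC⟩ := hC
        rcases eq_or_ne D C with rfl | hne
        · exact hsig (hasSunflower_mono (h𝒞 D hC𝒞).1 hle)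
        · have hlt := core_card_lt huni h2le (h𝒞 C hC𝒞).1
          have hlt2 : D.card < C.card :=
            Finset.card_lt_card (Finset.ssubset_iff_subset_ne.mpr ⟨hDC, hne⟩)
          omega
      rw [hempty]
      simp
  | succ m ih =>
    intro D hDn
    by_cases hsig : HasSunflower H D (k + 1)
    · exact hsingle (m + 1) D hsig
    · obtain ⟨Y, hYc, hYp⟩ := exists_candidates hd hk huni D hsig
      have hsub : 𝒞.filter (fun C => D ⊆ C) ⊆
          (Y \ D).biUnion (fun x => 𝒞.filter (fun C => insert x D ⊆ C)) := by
        intro C hC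
        rw [Finset.mem_filter] at hC
        obtain ⟨hC𝒞, hDC⟩ := hC
        have hne : D ≠ C := by
          rintro rfl
          exact hsig (hasSunflower_mono (h𝒞 D hC𝒞).1 hle)
        obtain ⟨x, hxY, hxC, hxD⟩ :=
          hYp C (Finset.ssubset_iff_subset_ne.mpr ⟨hDC, hne⟩) (h𝒞 C hC𝒞).1
        exact Finset.mem_biUnion.mpr ⟨x, Finset.mem_sdiff.mpr ⟨hxY, hxD⟩,
          Finset.mem_filter.mpr ⟨hC𝒞, Finset.insert_subset hxC hDC⟩⟩
      have hstep : ∀ x ∈ Y \ D, (𝒞.filter (fun C => insert x D ⊆ C)).card ≤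
          (d - D.card - 1).factorial * k ^ m := by
        intro x hx
        have hxD := (Finset.mem_sdiff.mp hx).2
        have h1 := ih (insert x D) (by rw [Finset.card_insert_of_notMem hxD]; omega)
        rwa [Finset.card_insert_of_notMem hxD,
          show d - (D.card + 1) = d - D.card - 1 from by omega] at h1
      calc (𝒞.filter (fun C => D ⊆ C)).card
          ≤ ((Y \ D).biUnion (fun x => 𝒞.filter (fun C => insert x D ⊆ C))).card :=
            Finset.card_le_card hsub
        _ ≤ ∑ x ∈ Y \ D, (𝒞.filter (fun C => insert x D ⊆ C)).card :=
            Finset.card_biUnion_le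
        _ ≤ ∑ _x ∈ Y \ D, (d - D.card - 1).factorial * k ^ m :=
            Finset.sum_le_sum hstep
        _ = (Y \ D).card * ((d - D.card - 1).factorial * k ^ m) := by
            rw [Finset.sum_const, smul_eq_mul]
        _ ≤ ((d - D.card) * k) * ((d - D.card - 1).factorial * k ^ m) :=
            Nat.mul_le_mul_right _ (le_trans (Finset.card_le_card Finset.sdiff_subset) hYc)
        _ ≤ (d - D.card).factorial * k ^ (m + 1) := by
            rcases Nat.eq_zero_or_pos (d - D.card) with h0 | hpos'
            · simp [h0]
            · obtain ⟨j, hj⟩ : ∃ j, d - D.card = j + 1 := ⟨d - D.card - 1, by omega⟩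
              rw [hj]
              have hj1 : j + 1 - 1 = j := by omega
              rw [hj1, Nat.factorial_succ, pow_succ]
              exact Nat.le_of_eq (by ring)

/-- If a `d`-uniform hypergraph `H` has a hitting set of size at most `k`, then the
number of large cores (cores of sunflowers with more than `10dk` hyperedges) of `H`
that do not contain any significant core (a core of a sunflower with more than `k`
hyperedges) as a proper subset is at most `(d-1)! * k^(d-1)`. -/
theorem stmt5 {V : Type*} [DecidableEq V] (H : Finset (Finset V)) (d k : ℕ)
    (hd : 1 ≤ d) (hk : 1 ≤ k) (hkd : d ≤ k + 1) (huni : ∀ F ∈ H, F.card = d)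
    (X : Finset V) (hX : IsHittingSet H X) (hXk : X.card ≤ k) :
    {C : Finset V | HasSunflower H C (10 * d * k + 1) ∧
        ¬ ∃ C' ⊂ C, HasSunflower H C' (k + 1)}.ncard ≤
      Nat.factorial (d - 1) * k ^ (d - 1) := by
  classical
  have hle : k + 1 ≤ 10 * d * k + 1 := by
    have h1 : 1 * k ≤ 10 * d * k := Nat.mul_le_mul_right k (by omega)
    linarith
  have h2le : 2 ≤ 10 * d * k + 1 :=
    Nat.succ_le_succ (Nat.mul_pos (Nat.mul_pos (by norm_num) hd) hk)
  set 𝒞 : Finset (Finset V) := (H.biUnion id).powerset.filter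
    (fun C => HasSunflower H C (10 * d * k + 1) ∧
      ¬ ∃ C' ⊂ C, HasSunflower H C' (k + 1)) with h𝒞def
  have hsetEq : {C : Finset V | HasSunflower H C (10 * d * k + 1) ∧
      ¬ ∃ C' ⊂ C, HasSunflower H C' (k + 1)} = (𝒞 : Set (Finset V)) := by
    ext C
    simp only [Set.mem_setOf_eq, Finset.mem_coe, h𝒞def, Finset.mem_filter,
      Finset.mem_powerset]
    constructor
    · rintro ⟨h1, h2⟩
      refine ⟨?_, h1, h2⟩
      obtain ⟨S, hSH, hcard, hsub, _⟩ := h1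
      have hS : S.Nonempty := Finset.card_pos.mp (by omega)
      obtain ⟨F, hF⟩ := hS
      exact (hsub F hF).trans (Finset.subset_biUnion_of_mem id (hSH hF))
    · rintro ⟨_, h1, h2⟩
      exact ⟨h1, h2⟩
  rw [hsetEq, Set.ncard_coe_finset]
  have h𝒞mem : ∀ C ∈ 𝒞, HasSunflower H C (10 * d * k + 1) ∧
      ¬ ∃ C' ⊂ C, HasSunflower H C' (k + 1) :=
    fun C hC => (Finset.mem_filter.mp hC).2
  rcases eq_or_lt_of_le hd with hd1 | hd2
  · -- d = 1 : there are no such cores at all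
    have hempty : 𝒞 = ∅ := by
      apply Finset.eq_empty_of_forall_notMem
      intro C hC
      obtain ⟨h1, _⟩ := h𝒞mem C hC
      obtain ⟨x, hx⟩ := sig_inter_X hX hXk (hasSunflower_mono h1 hle)
      have hcard := core_card_lt huni h2le h1
      have hC0 : C = ∅ := Finset.card_eq_zero.mp (by omega)
      rw [hC0] at hx
      simp at hx
    rw [hempty]
    simp
  · -- d ≥ 2
    have hsub : 𝒞 ⊆ X.biUnion (fun x => 𝒞.filter (fun C => ({x} : Finset V) ⊆ C)) := by
      intro C hC
      obtain ⟨x, hx⟩ := sig_inter_X hX hXk (hasSunflower_mono (h𝒞mem C hC).1 hle)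
      rw [Finset.mem_inter] at hx
      exact Finset.mem_biUnion.mpr ⟨x, hx.2,
        Finset.mem_filter.mpr ⟨hC, Finset.singleton_subset_iff.mpr hx.1⟩⟩
    calc 𝒞.card ≤ (X.biUnion (fun x => 𝒞.filter (fun C => ({x} : Finset V) ⊆ C))).card :=
          Finset.card_le_card hsub
      _ ≤ ∑ x ∈ X, (𝒞.filter (fun C => ({x} : Finset V) ⊆ C)).card :=
          Finset.card_biUnion_le
      _ ≤ ∑ _x ∈ X, (d - 1).factorial * k ^ (d - 2) := Finset.sum_le_sum (by
          intro x hx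
          have h1 := count_aux hd hk huni 𝒞 h𝒞mem (d - 2) {x}
            (by rw [Finset.card_singleton]; omega)
          simpa using h1)
      _ = X.card * ((d - 1).factorial * k ^ (d - 2)) := by
          rw [Finset.sum_const, smul_eq_mul]
      _ ≤ k * ((d - 1).factorial * k ^ (d - 2)) := Nat.mul_le_mul_right _ hXk
      _ = (d - 1).factorial * k ^ (d - 1) := by
          have hde : d - 1 = (d - 2) + 1 := by omega
          rw [hde, pow_succ]
          ring
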